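/- arXiv:2411.01181 — 2 statements merged into one kernel-verified Lean document; each statement's English description precedes it below -/
import Mathlib

section
/- Let λ̲, α, k₁ > 0 with α ≤ 1 and k₁ ≥ 1, and let z_s, z_u : ℝ × ℝ → ℝ satisfy z_s(t,s) ≤ k₁ exp(−(λ̲/2)(t−s)) for t ≥ s and z_u(s,t) ≤ k₁ exp(−(λ̲/2)(t−s)) for t ≥ s, together with the cocycle identities. Then for every θ ≥ 0, τ ∈ ℝ and M ≥ θ: ∫₀^θ z_s(θ+τ, s+τ) · (z_s(s+τ, τ))^α · z_u(s+τ, M+τ) ds ≤ (2 k₁^{2+α} / λ̲) · z_u(θ+τ, M+τ). -/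
set_option maxHeartbeats 1000000


open Real

/-- First integral estimate in the proof of Lemma 5.7 (L-S-Lin-). -/
theorem stmt_2
    (lam α k₁ : ℝ) (zs zu : ℝ → ℝ → ℝ)
    (hlam : 0 < lam) (hα : 0 < α) (hα1 : α ≤ 1) (hk₁ : 1 ≤ k₁)
    (hpos_s : ∀ t s : ℝ, 0 < zs t s) (hpos_u : ∀ t s : ℝ, 0 < zu t s)
    (hcoc_s : ∀ t r s : ℝ, zs t s = zs t r * zs r s)
    (hcoc_u : ∀ t r s : ℝ, zu t s = zu t r * zu r s)
    (hdec_s : ∀ t s : ℝ, s ≤ t → zs t s ≤ k₁ * exp (-(lam / 2) * (t - s)))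
    (hdec_u : ∀ t s : ℝ, s ≤ t → zu s t ≤ k₁ * exp (-(lam / 2) * (t - s))) :
    ∀ (θ τ M : ℝ), 0 ≤ θ → θ ≤ M →
      (∫ s in (0:ℝ)..θ, zs (θ + τ) (s + τ) * (zs (s + τ) τ) ^ α * zu (s + τ) (M + τ))
        ≤ (2 * k₁ ^ ((2:ℝ) + α) / lam) * zu (θ + τ) (M + τ) := by
  intro θ τ M hθ hM
  have hk0 : (0:ℝ) < k₁ := lt_of_lt_of_le one_pos hk₁
  have hC : 0 < zu (θ + τ) (M + τ) := hpos_u _ _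
  set C := zu (θ + τ) (M + τ) with hCdef
  have hRHS : 0 ≤ 2 * k₁ ^ ((2:ℝ) + α) / lam * C := by positivity
  set f : ℝ → ℝ := fun s => zs (θ + τ) (s + τ) * (zs (s + τ) τ) ^ α * zu (s + τ) (M + τ)
    with hf
  by_cases hint : IntervalIntegrable f MeasureTheory.volume 0 θ
  · set K := k₁ ^ 2 * k₁ ^ α * C with hK
    have hKpos : 0 < K := by positivity
    have hbound : ∀ s ∈ Set.Icc (0:ℝ) θ, f s ≤ K * exp (-lam * (θ - s)) := by
      intro s hs
      obtain ⟨hs0, hsθ⟩ := hs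
      set e : ℝ := exp (-(lam / 2) * (θ - s)) with he
      have hepos : 0 < e := exp_pos _
      have h1 : zs (θ + τ) (s + τ) ≤ k₁ * e := by
        have h := hdec_s (θ + τ) (s + τ) (by linarith)
        rwa [show -(lam / 2) * (θ + τ - (s + τ)) = -(lam / 2) * (θ - s) by ring] at h
      have h2 : (zs (s + τ) τ) ^ α ≤ k₁ ^ α := by
        have hb : zs (s + τ) τ ≤ k₁ * exp (-(lam / 2) * s) := by
          have h := hdec_s (s + τ) τ (by linarith)
          rwa [show s + τ - τ = s by ring] at h
        calc (zs (s + τ) τ) ^ α ≤ (k₁ * exp (-(lam / 2) * s)) ^ α :=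
              Real.rpow_le_rpow (hpos_s _ _).le hb hα.le
          _ = k₁ ^ α * (exp (-(lam / 2) * s)) ^ α :=
              Real.mul_rpow hk0.le (exp_pos _).le
          _ ≤ k₁ ^ α * 1 := by
              have : (exp (-(lam / 2) * s)) ^ α = exp (-(lam / 2) * s * α) :=
                (Real.exp_mul _ _).symm
              rw [this]
              have h0 : 0 ≤ lam / 2 * s * α := by positivity
              have : -(lam / 2) * s * α ≤ 0 := by linarith
              have := Real.exp_le_one_iff.mpr this
              nlinarith [Real.rpow_pos_of_pos hk0 α]
          _ = k₁ ^ α := mul_one _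
      have h3 : zu (s + τ) (M + τ) ≤ k₁ * e * C := by
        have hco := hcoc_u (s + τ) (θ + τ) (M + τ)
        have hd : zu (s + τ) (θ + τ) ≤ k₁ * e := by
          have h := hdec_u (θ + τ) (s + τ) (by linarith)
          rwa [show -(lam / 2) * (θ + τ - (s + τ)) = -(lam / 2) * (θ - s) by ring] at h
        calc zu (s + τ) (M + τ) = zu (s + τ) (θ + τ) * C := by rw [hco]
          _ ≤ k₁ * e * C := by
              exact mul_le_mul_of_nonneg_right hd hC.le
      have hmain : f s ≤ (k₁ * e) * k₁ ^ α * (k₁ * e * C) := by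
        simp only [hf]
        have hzα : 0 ≤ (zs (s + τ) τ) ^ α := (Real.rpow_pos_of_pos (hpos_s _ _) α).le
        apply mul_le_mul _ h3 (hpos_u _ _).le (by positivity)
        exact mul_le_mul h1 h2 hzα (by positivity)
      have heq : (k₁ * e) * k₁ ^ α * (k₁ * e * C) = K * exp (-lam * (θ - s)) := by
        have : e * e = exp (-lam * (θ - s)) := by
          rw [he, ← Real.exp_add]; ring_nf
        rw [hK, ← this]; ring
      rw [heq] at hmain
      exact hmain
    have hgint : IntervalIntegrable (fun s => K * exp (-lam * (θ - s)))
        MeasureTheory.volume 0 θ := by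
      apply Continuous.intervalIntegrable
      continuity
    have hmono := intervalIntegral.integral_mono_on hθ hint hgint hbound
    have hcomp : (∫ s in (0:ℝ)..θ, K * exp (-lam * (θ - s)))
        = K * ((1 - exp (-lam * θ)) / lam) := by
      rw [intervalIntegral.integral_const_mul]
      have hderiv : ∀ s ∈ Set.uIcc (0:ℝ) θ,
          HasDerivAt (fun x => exp (-lam * (θ - x)) / lam) (exp (-lam * (θ - s))) s := by
        intro s _
        have h1 : HasDerivAt (fun x : ℝ => -lam * (θ - x)) lam s := by
          have := ((hasDerivAt_id s).const_sub θ).const_mul (-lam)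
          simpa using this
        have h2 := (h1.exp).div_const lam
        simpa [mul_div_assoc, mul_div_cancel_left₀, hlam.ne'] using h2
      have := intervalIntegral.integral_eq_sub_of_hasDerivAt hderiv
        (by apply Continuous.intervalIntegrable; continuity)
      rw [this, show θ - θ = (0:ℝ) by ring, sub_zero]
      rw [show -lam * (0:ℝ) = 0 by ring, exp_zero]
      ring
    have hfinal : K * ((1 - exp (-lam * θ)) / lam) ≤ 2 * k₁ ^ ((2:ℝ) + α) / lam * C := by
      have hrp : k₁ ^ ((2:ℝ) + α) = k₁ ^ 2 * k₁ ^ α := by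
        rw [Real.rpow_add hk0, show ((2:ℝ)) = ((2:ℕ):ℝ) by norm_num, Real.rpow_natCast]
      have h2 : (1 - exp (-lam * θ)) / lam ≤ 2 / lam := by
        have := exp_pos (-lam * θ)
        gcongr
        linarith
      have h3 : K * ((1 - exp (-lam * θ)) / lam) ≤ K * (2 / lam) :=
        mul_le_mul_of_nonneg_left h2 hKpos.le
      have h4 : K * (2 / lam) = 2 * k₁ ^ ((2:ℝ) + α) / lam * C := by
        rw [hrp, hK]; ring
      linarith
    calc (∫ s in (0:ℝ)..θ, f s) ≤ ∫ s in (0:ℝ)..θ, K * exp (-lam * (θ - s)) := hmono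
      _ = K * ((1 - exp (-lam * θ)) / lam) := hcomp
      _ ≤ 2 * k₁ ^ ((2:ℝ) + α) / lam * C := hfinal
  · rw [hf, intervalIntegral.integral_undef hint]
    exact hRHS
end

section
/- Let λ̲ > 0, 0 < α ≤ 1, k₁ ≥ 1, and let z_s, z_u satisfy the cocycle identities and the decay bounds z_s(t,s) ≤ k₁ exp(−(λ̲/2)(t−s)) for t ≥ s and z_u(s,t) ≤ k₁ exp(−(λ̲/2)(t−s)) for t ≥ s. Then for every θ ≥ 0, τ ∈ ℝ and M ≥ θ: ∫₀^θ z_s(θ+τ, s+τ) · (z_u(s+τ, M+τ))^{1+α} ds ≤ (2 k₁^{2+2α} / (λ̲(2+α))) · z_u(θ+τ, M+τ). -/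
open Real

/-- Second integral estimate in the proof of Lemma 5.7 (L-S-Lin-). -/
theorem stmt_3
    (lam α k₁ : ℝ) (zs zu : ℝ → ℝ → ℝ)
    (hlam : 0 < lam) (hα : 0 < α) (hα1 : α ≤ 1) (hk₁ : 1 ≤ k₁)
    (hpos_s : ∀ t s : ℝ, 0 < zs t s) (hpos_u : ∀ t s : ℝ, 0 < zu t s)
    (hcoc_s : ∀ t r s : ℝ, zs t s = zs t r * zs r s)
    (hcoc_u : ∀ t r s : ℝ, zu t s = zu t r * zu r s)
    (hdec_s : ∀ t s : ℝ, s ≤ t → zs t s ≤ k₁ * exp (-(lam / 2) * (t - s)))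
    (hdec_u : ∀ t s : ℝ, s ≤ t → zu s t ≤ k₁ * exp (-(lam / 2) * (t - s))) :
    ∀ (θ τ M : ℝ), 0 ≤ θ → θ ≤ M →
      (∫ s in (0:ℝ)..θ, zs (θ + τ) (s + τ) * (zu (s + τ) (M + τ)) ^ ((1:ℝ) + α))
        ≤ (2 * k₁ ^ ((2:ℝ) + 2 * α) / (lam * (2 + α))) * zu (θ + τ) (M + τ) := by
  intro θ τ M hθ hM
  have h2α : (0:ℝ) < 2 + α := by linarith
  have hk0 : (0:ℝ) < k₁ := lt_of_lt_of_le one_pos hk₁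
  set C := zu (θ + τ) (M + τ) with hC
  have hCpos : 0 < C := hpos_u _ _
  set c : ℝ := lam / 2 * (2 + α) with hc
  have hcpos : 0 < c := mul_pos (by linarith) h2α
  set K : ℝ := k₁ ^ ((2:ℝ) + 2 * α) * C with hK
  have hKpos : 0 < K := mul_pos (rpow_pos_of_pos hk0 _) hCpos
  have hCle : C ≤ k₁ := by
    have h1 := hdec_u (M + τ) (θ + τ) (by linarith)
    have h2 : M + τ - (θ + τ) = M - θ := by ring
    rw [h2] at h1
    have h3 : exp (-(lam / 2) * (M - θ)) ≤ 1 := by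
      apply exp_le_one_iff.mpr
      nlinarith
    nlinarith [exp_pos (-(lam / 2) * (M - θ))]
  -- pointwise bound
  have hpt : ∀ s ∈ Set.Icc (0:ℝ) θ,
      zs (θ + τ) (s + τ) * (zu (s + τ) (M + τ)) ^ ((1:ℝ) + α)
        ≤ K * exp (-c * (θ - s)) := by
    intro s hs
    obtain ⟨hs0, hsθ⟩ := hs
    have hsub : θ + τ - (s + τ) = θ - s := by ring
    have hApos := hpos_u (s + τ) (θ + τ)
    have hEpos := exp_pos (-(lam / 2) * (θ - s))
    have hA : zu (s + τ) (θ + τ) ≤ k₁ * exp (-(lam / 2) * (θ - s)) := by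
      have := hdec_u (θ + τ) (s + τ) (by linarith)
      rwa [hsub] at this
    have hS : zs (θ + τ) (s + τ) ≤ k₁ * exp (-(lam / 2) * (θ - s)) := by
      have := hdec_s (θ + τ) (s + τ) (by linarith)
      rwa [hsub] at this
    have hsplit : zu (s + τ) (M + τ) = zu (s + τ) (θ + τ) * C := hcoc_u _ _ _
    have h2' : (zu (s + τ) (M + τ)) ^ ((1:ℝ) + α)
        ≤ (k₁ * exp (-(lam / 2) * (θ - s))) ^ ((1:ℝ) + α) * (C * k₁ ^ α) := by
      rw [hsplit, mul_rpow hApos.le hCpos.le]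
      have hCrw : C ^ ((1:ℝ) + α) = C * C ^ α := by
        rw [rpow_add hCpos, rpow_one]
      rw [hCrw]
      have h1α : (0:ℝ) ≤ 1 + α := by linarith
      exact mul_le_mul (rpow_le_rpow hApos.le hA h1α)
        (mul_le_mul_of_nonneg_left (rpow_le_rpow hCpos.le hCle hα.le) hCpos.le)
        (by positivity) (rpow_nonneg (by positivity) _)
    have hmain : zs (θ + τ) (s + τ) * (zu (s + τ) (M + τ)) ^ ((1:ℝ) + α)
        ≤ (k₁ * exp (-(lam / 2) * (θ - s))) *
          ((k₁ * exp (-(lam / 2) * (θ - s))) ^ ((1:ℝ) + α) * (C * k₁ ^ α)) := by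
      exact mul_le_mul hS h2' (rpow_nonneg (hpos_u _ _).le _) (by positivity)
    refine hmain.trans_eq ?_
    have hkpow : k₁ ^ ((2:ℝ) + 2 * α) = k₁ * (k₁ ^ ((1:ℝ) + α) * k₁ ^ α) := by
      have he : (2:ℝ) + 2 * α = 1 + ((1 + α) + α) := by ring
      rw [he, rpow_add hk0, rpow_add hk0, rpow_one]
    have hexp : exp (-(lam / 2) * (θ - s)) * exp ((-(lam / 2) * (θ - s)) * ((1:ℝ) + α))
        = exp (-c * (θ - s)) := by
      rw [← exp_add]; congr 1; rw [hc]; ring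
    rw [mul_rpow hk0.le hEpos.le, ← exp_mul, hK, hkpow, ← hexp]
    ring
  -- integrability of the majorant
  have hcont : Continuous (fun s : ℝ => K * exp (-c * (θ - s))) := by fun_prop
  have hInt2 : IntervalIntegrable (fun s : ℝ => K * exp (-c * (θ - s)))
      MeasureTheory.volume 0 θ := hcont.intervalIntegrable _ _
  by_cases hLI : IntervalIntegrable
      (fun s => zs (θ + τ) (s + τ) * (zu (s + τ) (M + τ)) ^ ((1:ℝ) + α))
      MeasureTheory.volume 0 θ
  · have h1 := intervalIntegral.integral_mono_on hθ hLI hInt2 hpt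
    have hval : (∫ s in (0:ℝ)..θ, exp (-c * (θ - s))) = 1 / c - exp (-c * θ) / c := by
      have hder : ∀ s ∈ Set.uIcc (0:ℝ) θ,
          HasDerivAt (fun s : ℝ => exp (-c * (θ - s)) / c) (exp (-c * (θ - s))) s := by
        intro s _
        have h1' : HasDerivAt (fun s : ℝ => -c * (θ - s)) c s := by
          have := ((hasDerivAt_id s).const_sub θ).const_mul (-c)
          simpa using this
        have h2' := (h1'.exp).div_const c
        simpa [mul_div_assoc, div_self hcpos.ne'] using h2'
      rw [intervalIntegral.integral_eq_sub_of_hasDerivAt hder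
        ((by fun_prop : Continuous fun s : ℝ => exp (-c * (θ - s))).intervalIntegrable _ _)]
      simp [mul_comm]
    have h2 : (∫ s in (0:ℝ)..θ, K * exp (-c * (θ - s)))
        = K * (1 / c - exp (-c * θ) / c) := by
      rw [intervalIntegral.integral_const_mul, hval]
    have h3 : K * (1 / c - exp (-c * θ) / c) ≤ K * (1 / c) := by
      have : (0:ℝ) ≤ exp (-c * θ) / c := by positivity
      nlinarith
    have h4 : K * (1 / c) = 2 * k₁ ^ ((2:ℝ) + 2 * α) / (lam * (2 + α)) * C := by
      rw [hK, hc]; field_simp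
    calc (∫ s in (0:ℝ)..θ, zs (θ + τ) (s + τ) * (zu (s + τ) (M + τ)) ^ ((1:ℝ) + α))
        ≤ ∫ s in (0:ℝ)..θ, K * exp (-c * (θ - s)) := h1
      _ = K * (1 / c - exp (-c * θ) / c) := h2
      _ ≤ K * (1 / c) := h3
      _ = 2 * k₁ ^ ((2:ℝ) + 2 * α) / (lam * (2 + α)) * C := h4
  · rw [intervalIntegral.integral_undef hLI]
    positivity
end
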